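/- Let K be a field and q1,...,qr quadratic forms in n variables over K. Suppose every system of r quadratic forms over K in more than B variables has a nontrivial common zero, and suppose n > (r+1)*m + B. If W is a linear subspace of K^n of dimension m on which all qi vanish identically, then there exists a linear subspace W' of dimension m+1 containing W on which all qi vanish identically. -/

import Mathlib

/-- The inductive step for `β(r;K,m) ≤ (r+1)m + β(r;K)`: if every system
of `r` quadratic forms over `K` in more than `B` variables has a nontrivial common
zero, `n > (r+1)m + B`, and all the `qᵢ` vanish identically on an `m`-dimensional
subspace `W` of `Kⁿ`, then they vanish identically on some `(m+1)`-dimensional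
subspace containing `W`. -/
theorem stmt9 (K : Type*) [Field K] (r n m B : ℕ)
    (q : Fin r → QuadraticForm K (Fin n → K))
    (hB : ∀ (n' : ℕ) (Q : Fin r → QuadraticForm K (Fin n' → K)), n' > B →
      ∃ v : Fin n' → K, v ≠ 0 ∧ ∀ i, Q i v = 0)
    (hn : n > (r + 1) * m + B)
    (W : Submodule K (Fin n → K)) (hW : Module.finrank K W = m)
    (hvan : ∀ i, ∀ v ∈ W, q i v = 0) :
    ∃ W' : Submodule K (Fin n → K), Module.finrank K W' = m + 1 ∧ W ≤ W' ∧
      ∀ i, ∀ v ∈ W', q i v = 0 := by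
  classical
  have b : Module.Basis (Fin m) K W := Module.finBasisOfFinrankEq K W hW
  -- the linear map recording the polar pairings with a basis of W
  set L : (Fin n → K) →ₗ[K] (Fin r × Fin m → K) :=
    LinearMap.pi (fun p => (q p.1).polarBilin ((b p.2 : W) : Fin n → K)) with hL
  set V0 : Submodule K (Fin n → K) := LinearMap.ker L with hV0
  have hV0pol : ∀ v ∈ V0, ∀ i j, QuadraticMap.polar (q i) ((b j : W) : Fin n → K) v = 0 := by
    intro v hv i j
    have := congrFun (LinearMap.mem_ker.mp hv) (i, j)
    simpa [hL] using this
  -- dimension of V0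
  have hrk : Module.finrank K (LinearMap.range L) + Module.finrank K V0
      = Module.finrank K (Fin n → K) := L.finrank_range_add_finrank_ker
  have hrange_le : Module.finrank K (LinearMap.range L) ≤ r * m := by
    have h1 : Module.finrank K (LinearMap.range L)
        ≤ Module.finrank K (Fin r × Fin m → K) := (LinearMap.range L).finrank_le
    simpa [Module.finrank_pi] using h1
  have hfn : Module.finrank K (Fin n → K) = n := by simp [Module.finrank_pi]
  -- complement of V0 ⊓ W inside V0
  set W0 : Submodule K (Fin n → K) := V0 ⊓ W with hW0
  obtain ⟨U', hU'⟩ := Submodule.exists_isCompl W0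
  set U : Submodule K (Fin n → K) := U' ⊓ V0 with hU
  have hW0le : W0 ≤ V0 := inf_le_left
  have hsup : W0 ⊔ U = V0 := by
    have := sup_inf_assoc_of_le (z := V0) U' hW0le
    rw [hU'.codisjoint.eq_top] at this
    simpa [hU] using this.symm
  have hinf : W0 ⊓ U = ⊥ := by
    have : W0 ⊓ U ≤ W0 ⊓ U' := inf_le_inf_left _ inf_le_left
    rw [hU'.disjoint.eq_bot] at this
    exact le_bot_iff.mp this
  have hdim : Module.finrank K W0 + Module.finrank K U = Module.finrank K V0 := by
    have := Submodule.finrank_sup_add_finrank_inf_eq W0 U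
    rw [hsup, hinf] at this
    simpa using this.symm
  have hW0dim : Module.finrank K W0 ≤ m := hW ▸ Submodule.finrank_mono inf_le_right
  -- U is big
  have hUbig : Module.finrank K U > B := by
    have hrm : (r + 1) * m = r * m + m := by ring
    omega
  -- find a common zero in U
  set d : ℕ := Module.finrank K U with hd
  have bU : Module.Basis (Fin d) K U := Module.finBasisOfFinrankEq K U rfl
  set e : (Fin d → K) ≃ₗ[K] U := bU.equivFun.symm with he
  set Q : Fin r → QuadraticForm K (Fin d → K) :=
    fun i => (q i).comp (U.subtype ∘ₗ (e : (Fin d → K) →ₗ[K] U)) with hQ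
  obtain ⟨v, hv0, hvQ⟩ := hB d Q hUbig
  set u : Fin n → K := ((e v : U) : Fin n → K) with hu
  have huU : u ∈ U := (e v).2
  have hune : u ≠ 0 := by
    intro h
    have h0 : e v = 0 := by rwa [hu, Submodule.coe_eq_zero] at h
    have h1 := congrArg e.symm h0
    rw [e.symm_apply_apply, LinearEquiv.map_zero] at h1
    exact hv0 h1
  have hqu : ∀ i, q i u = 0 := fun i => by
    simpa [hQ, QuadraticMap.comp_apply, hu] using hvQ i
  have huV0 : u ∈ V0 := (inf_le_right : U' ⊓ V0 ≤ V0) huU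
  -- polar of anything in W with u vanishes
  have hpol : ∀ i, ∀ w ∈ W, QuadraticMap.polar (q i) w u = 0 := by
    intro i w hw
    set g : (Fin n → K) →ₗ[K] K := ((q i).polarBilin).flip u with hg
    have hgb : ∀ j, g ((b j : W) : Fin n → K) = 0 := fun j => hV0pol u huV0 i j
    have hrepr : (∑ j, b.repr ⟨w, hw⟩ j • ((b j : W) : Fin n → K)) = w := by
      have := b.sum_repr ⟨w, hw⟩
      calc (∑ j, b.repr ⟨w, hw⟩ j • ((b j : W) : Fin n → K))
          = ((∑ j, b.repr ⟨w, hw⟩ j • b j : W) : Fin n → K) := by push_cast; rfl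
        _ = w := by rw [this]
    have : g w = 0 := by
      rw [← hrepr, map_sum]
      simp [map_smul, hgb]
    simpa [hg] using this
  have huW : u ∉ W := by
    intro hmem
    have : u ∈ W0 ⊓ U' := ⟨⟨huV0, hmem⟩, (inf_le_left : U' ⊓ V0 ≤ U') huU⟩
    rw [hU'.disjoint.eq_bot] at this
    exact hune this
  -- the new subspace
  refine ⟨W ⊔ (K ∙ u), ?_, le_sup_left, ?_⟩
  · have hds : W ⊓ (K ∙ u) = ⊥ :=
      (Submodule.disjoint_span_singleton' hune).mpr huW |>.eq_bot
    have := Submodule.finrank_sup_add_finrank_inf_eq W (K ∙ u)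
    rw [hds, finrank_bot, add_zero, hW, finrank_span_singleton hune] at this
    exact this
  · intro i x hx
    obtain ⟨w, hw, z, hz, rfl⟩ := Submodule.mem_sup.mp hx
    obtain ⟨c, rfl⟩ := Submodule.mem_span_singleton.mp hz
    have hsplit : q i (w + c • u)
        = QuadraticMap.polar (q i) w (c • u) + q i w + q i (c • u) := by
      simp [QuadraticMap.polar]; ring
    rw [hsplit, QuadraticMap.polar_smul_right, hpol i w hw, QuadraticMap.map_smul,
      hqu i, hvan i w hw]
    simp
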